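/- Center of mass normalization: let Ω ⊂ ℝⁿ be a bounded domain, v : Ω → ℝ nonnegative and integrable with ∫_Ω v dx > 0, and g : [0,∞) → ℝ continuous and nonnegative with ∫₀^∞ g(r) dr = ∞. Then there exists y ∈ ℝⁿ such that for each i = 1,…,n, ∫_{Ω−y} g(|x|)·(xᵢ/|x|)·v(x+y) dx = 0. -/

import Mathlib

open MeasureTheory Set Metric

local notation "⟪" x ", " y "⟫" => @inner ℝ _ _ x y

lemma aux_normline_hasDerivAt {n : ℕ} (c d : EuclideanSpace ℝ (Fin n)) (t : ℝ)
    (h : c + t • d ≠ 0) :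
    HasDerivAt (fun s : ℝ => ‖c + s • d‖) (⟪c + t • d, d⟫ / ‖c + t • d‖) t := by
  set z := c + t • d with hz
  have hline : HasDerivAt (fun s : ℝ => c + s • d) d t := by
    simpa using ((hasDerivAt_id t).smul_const d).const_add c
  have hq : HasDerivAt (fun s : ℝ => ⟪c + s • d, c + s • d⟫) (2 * ⟪z, d⟫) t := by
    have h2 := hline.inner ℝ hline
    exact h2.congr_deriv (by rw [two_mul, real_inner_comm (c + t • d) d])
  have hq0 : ⟪z, z⟫ ≠ 0 := inner_self_ne_zero.mpr h
  have hs : HasDerivAt (fun s : ℝ => Real.sqrt ⟪c + s • d, c + s • d⟫)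
      (1 / (2 * Real.sqrt ⟪z, z⟫) * (2 * ⟪z, d⟫)) t :=
    (Real.hasDerivAt_sqrt hq0).comp t hq
  have hsqrt : ∀ w : EuclideanSpace ℝ (Fin n), Real.sqrt ⟪w, w⟫ = ‖w‖ := fun w => by
    rw [real_inner_self_eq_norm_sq, Real.sqrt_sq (norm_nonneg _)]
  have hz0 : ‖z‖ ≠ 0 := norm_ne_zero_iff.mpr h
  have : (1 / (2 * Real.sqrt ⟪z, z⟫) * (2 * ⟪z, d⟫)) = ⟪z, d⟫ / ‖z‖ := by
    rw [hsqrt]; field_simp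
  rw [this] at hs
  convert hs using 2 with s
  rw [← hsqrt]

noncomputable def auxF (G : ℝ → ℝ) (r : ℝ) : ℝ := ∫ t in (0:ℝ)..r, G t

lemma auxF_hasDerivAt {G : ℝ → ℝ} (hGc : Continuous G) (r : ℝ) :
    HasDerivAt (auxF G) (G r) r :=
  intervalIntegral.integral_hasDerivAt_right (hGc.intervalIntegrable 0 r)
    hGc.stronglyMeasurable.stronglyMeasurableAtFilter hGc.continuousAt

lemma auxF_mono {G : ℝ → ℝ} (hGc : Continuous G) (hGnn : ∀ r, 0 ≤ G r) :
    Monotone (auxF G) := by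
  intro a b hab
  have h1 := intervalIntegral.integral_add_adjacent_intervals
    (hGc.intervalIntegrable (μ := volume) 0 a) (hGc.intervalIntegrable (μ := volume) a b)
  have h2 : 0 ≤ ∫ t in a..b, G t :=
    intervalIntegral.integral_nonneg hab fun x _ => hGnn x
  simp only [auxF]
  linarith

lemma auxF_nonneg {G : ℝ → ℝ} (hGc : Continuous G) (hGnn : ∀ r, 0 ≤ G r) (r : ℝ)
    (hr : 0 ≤ r) : 0 ≤ auxF G r := by
  have := auxF_mono hGc hGnn hr
  simpa [auxF] using this

lemma auxF_unbounded {G : ℝ → ℝ} (hGc : Continuous G) (hGnn : ∀ r, 0 ≤ G r)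
    (hdiv : ∫⁻ r in Set.Ioi (0 : ℝ), ENNReal.ofReal (G r) = ⊤) (C : ℝ) :
    ∃ r : ℝ, 0 ≤ r ∧ C < auxF G r := by
  by_contra hcon
  push_neg at hcon
  set f : ℕ → ℝ → ENNReal := fun m t =>
    (Set.Ioc (0:ℝ) m).indicator (fun t => ENNReal.ofReal (G t)) t with hf
  have hfmeas : ∀ m, Measurable (f m) := fun m =>
    (ENNReal.measurable_ofReal.comp hGc.measurable).indicator measurableSet_Ioc
  have hfmono : Monotone f := by
    intro a b hab t
    exact Set.indicator_le_indicator_of_subset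
      (Set.Ioc_subset_Ioc_right (by exact_mod_cast hab)) (fun _ => zero_le) t
  have hfsup : ∀ t, ⨆ m, f m t = (Set.Ioi (0:ℝ)).indicator (fun t => ENNReal.ofReal (G t)) t := by
    intro t
    rcases le_or_gt t 0 with ht | ht
    · have : ∀ m, f m t = 0 := fun m => Set.indicator_of_notMem (fun hm => lt_irrefl 0 (lt_of_lt_of_le hm.1 ht)) _
      simp [this, Set.indicator_of_notMem (fun hm : t ∈ Set.Ioi (0:ℝ) => absurd hm (not_lt.mpr ht))]
    · obtain ⟨m, hm⟩ := exists_nat_ge t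
      apply le_antisymm
      · refine iSup_le fun k => ?_
        rw [Set.indicator_of_mem (Set.mem_Ioi.mpr ht)]
        exact Set.indicator_le_self' (fun _ _ => zero_le) t
      · rw [Set.indicator_of_mem (Set.mem_Ioi.mpr ht)]
        refine le_trans (le_of_eq ?_) (le_iSup _ m)
        simp only [hf]
        rw [Set.indicator_of_mem (Set.mem_Ioc.mpr ⟨ht, hm⟩)]
  have hkey : ∀ m : ℕ, ∫⁻ t, f m t = ENNReal.ofReal (auxF G m) := by
    intro m
    simp only [hf]
    rw [lintegral_indicator measurableSet_Ioc]
    rw [← ofReal_integral_eq_lintegral_ofReal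
      (hGc.integrableOn_Icc.mono_set Set.Ioc_subset_Icc_self)
      (Filter.Eventually.of_forall fun t => hGnn t)]
    congr 1
    rw [auxF, intervalIntegral.integral_of_le (by exact_mod_cast Nat.zero_le m)]
  have : ∫⁻ r in Set.Ioi (0 : ℝ), ENNReal.ofReal (G r) ≤ ENNReal.ofReal C := by
    rw [← lintegral_indicator measurableSet_Ioi]
    have hswap : (fun t => (Set.Ioi (0:ℝ)).indicator (fun t => ENNReal.ofReal (G t)) t)
        = fun t => ⨆ m, f m t := by funext t; rw [hfsup]
    rw [hswap, lintegral_iSup hfmeas hfmono]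
    refine iSup_le fun m => ?_
    rw [hkey m]
    exact ENNReal.ofReal_le_ofReal (hcon _ (Nat.cast_nonneg m))
  rw [hdiv] at this
  exact absurd (le_antisymm le_top this ▸ rfl) (by simp : ENNReal.ofReal C ≠ ⊤) 
set_option maxHeartbeats 1000000 in
theorem center_of_mass_normalization (n : ℕ) (hn : 2 ≤ n)
    (Ω : Set (EuclideanSpace ℝ (Fin n))) (hΩmeas : MeasurableSet Ω)
    (hΩbdd : Bornology.IsBounded Ω)
    (v : EuclideanSpace ℝ (Fin n) → ℝ) (hv : ∀ x, 0 ≤ v x)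
    (hvint : IntegrableOn v Ω volume) (hvpos : 0 < ∫ x in Ω, v x)
    (g : ℝ → ℝ) (hg : ContinuousOn g (Set.Ici 0)) (hgnn : ∀ r : ℝ, 0 ≤ r → 0 ≤ g r)
    (hgdiv : ∫⁻ r in Set.Ioi (0 : ℝ), ENNReal.ofReal (g r) = ⊤) :
    ∃ y : EuclideanSpace ℝ (Fin n), ∀ i : Fin n,
      ∫ x in {x : EuclideanSpace ℝ (Fin n) | x + y ∈ Ω},
        g ‖x‖ * (x i / ‖x‖) * v (x + y) = 0 := by
  classical
  set G : ℝ → ℝ := fun r => g (max r 0) with hGdef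
  have hGc : Continuous G :=
    hg.comp_continuous (continuous_id.max continuous_const) fun r => Set.mem_Ici.mpr (le_max_right _ _)
  have hGnn : ∀ r, 0 ≤ G r := fun r => hgnn _ (le_max_right _ _)
  have hGg : ∀ r : ℝ, 0 ≤ r → G r = g r := fun r hr => by
    simp [hGdef, max_eq_left hr]
  have hGdiv : ∫⁻ r in Set.Ioi (0 : ℝ), ENNReal.ofReal (G r) = ⊤ := by
    rw [← hgdiv]
    refine setLIntegral_congr_fun measurableSet_Ioi ?_
    exact fun r hr => by rw [hGg r (le_of_lt hr)]
  set F := auxF G with hFdef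
  have hFc : Continuous F :=
    continuous_iff_continuousAt.mpr fun r => (auxF_hasDerivAt hGc r).continuousAt
  have hFmono : Monotone F := auxF_mono hGc hGnn
  have hFnn : ∀ r, 0 ≤ r → 0 ≤ F r := auxF_nonneg hGc hGnn
  -- bound on Ω
  obtain ⟨M, hM⟩ := hΩbdd.subset_closedBall 0
  have hMnn : 0 ≤ M ∨ Ω = ∅ := by
    rcases Set.eq_empty_or_nonempty Ω with h | ⟨x, hx⟩
    · exact Or.inr h
    · exact Or.inl (le_trans (norm_nonneg x) (by simpa using hM hx))
  have hΩne : Ω ≠ ∅ := by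
    intro h
    rw [h] at hvpos
    simp at hvpos
  have hMnn' : 0 ≤ M := hMnn.resolve_right hΩne
  have hxM : ∀ x ∈ Ω, ‖x‖ ≤ M := fun x hx => by simpa using hM hx
  have hvmeas : AEStronglyMeasurable v (volume.restrict Ω) := hvint.aestronglyMeasurable
  -- the Lyapunov function
  set L : EuclideanSpace ℝ (Fin n) → ℝ := fun y => ∫ x in Ω, F ‖y - x‖ * v x with hLdef
  have hmeasL : ∀ y : EuclideanSpace ℝ (Fin n),
      AEStronglyMeasurable (fun x => F ‖y - x‖ * v x) (volume.restrict Ω) := fun y =>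
    ((hFc.comp (continuous_const.sub continuous_id).norm).aestronglyMeasurable).mul hvmeas
  have hboundL : ∀ (y : EuclideanSpace ℝ (Fin n)) (B : ℝ), ‖y‖ ≤ B →
      ∀ᵐ x ∂volume.restrict Ω, ‖F ‖y - x‖ * v x‖ ≤ F (B + M) * v x := by
    intro y B hB
    filter_upwards [ae_restrict_mem hΩmeas] with x hx
    have h1 : ‖y - x‖ ≤ B + M :=
      le_trans (norm_sub_le _ _) (add_le_add hB (hxM x hx))
    have h2 : 0 ≤ F ‖y - x‖ := hFnn _ (norm_nonneg _)
    rw [Real.norm_eq_abs, abs_mul, abs_of_nonneg h2, abs_of_nonneg (hv x)]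
    exact mul_le_mul_of_nonneg_right (hFmono h1) (hv x)
  have hintL : ∀ y : EuclideanSpace ℝ (Fin n),
      Integrable (fun x => F ‖y - x‖ * v x) (volume.restrict Ω) := by
    intro y
    exact Integrable.mono' (hvint.const_mul (F (‖y‖ + M))) (hmeasL y)
      (hboundL y ‖y‖ le_rfl)
  have hLcont : Continuous L := by
    rw [continuous_iff_continuousAt]
    intro y₀
    refine continuousAt_of_dominated (bound := fun x => F (‖y₀‖ + 1 + M) * v x)
      (Filter.Eventually.of_forall hmeasL) ?_ (hvint.const_mul _) ?_
    · filter_upwards [Metric.ball_mem_nhds y₀ one_pos] with y hy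
      exact hboundL y (‖y₀‖ + 1)
        (by have := mem_ball_iff_norm.mp hy
            have h := norm_sub_norm_le y y₀
            linarith)
    · exact Filter.Eventually.of_forall fun x =>
        (((hFc.comp (continuous_id.sub continuous_const).norm).mul
          continuous_const).continuousAt)
  -- existence of a global minimizer
  set I := ∫ x in Ω, v x with hIdef
  obtain ⟨R₀, hR₀nn, hR₀⟩ := auxF_unbounded hGc hGnn hGdiv (L 0 / I)
  have hFR₀I : L 0 < F R₀ * I := by
    rw [div_lt_iff₀ hvpos] at hR₀
    linarith [hR₀]
  set R := R₀ + M with hRdef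
  have hRnn : 0 ≤ R := add_nonneg hR₀nn hMnn'
  obtain ⟨y, hyB, hymin⟩ := (isCompact_closedBall (0 : EuclideanSpace ℝ (Fin n)) R).exists_isMinOn
    ⟨0, mem_closedBall_self hRnn⟩ hLcont.continuousOn
  have hglobal : ∀ z, L y ≤ L z := by
    intro z
    by_cases hz : z ∈ closedBall (0 : EuclideanSpace ℝ (Fin n)) R
    · exact hymin hz
    · have hzR : R < ‖z‖ := by simpa [mem_closedBall, dist_eq_norm] using hz
      have hlow : ∀ᵐ x ∂volume.restrict Ω, F R₀ * v x ≤ F ‖z - x‖ * v x := by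
        filter_upwards [ae_restrict_mem hΩmeas] with x hx
        have : R₀ ≤ ‖z - x‖ := by
          have h1 := norm_sub_norm_le z x
          have h2 : ‖z‖ - ‖x‖ ≤ ‖z - x‖ := by
            have := norm_sub_norm_le z x
            exact le_trans (le_abs_self _) (by simpa [abs_sub_comm] using abs_norm_sub_norm_le z x)
          have := hxM x hx
          rw [hRdef] at hzR
          linarith
        exact mul_le_mul_of_nonneg_right (hFmono this) (hv x)
      have h3 : F R₀ * I ≤ L z := by
        rw [hIdef, ← integral_const_mul]
        exact integral_mono_ae (hvint.const_mul _) (hintL z) hlow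
      have h4 : L y ≤ L 0 := hymin (mem_closedBall_self hRnn)
      linarith
  refine ⟨y, fun i => ?_⟩
  -- derivative in direction i at the minimum
  set e : EuclideanSpace ℝ (Fin n) := EuclideanSpace.single i (1 : ℝ) with hedef
  have hnorme : ‖e‖ = 1 := by simp [hedef]
  -- the bad line has measure zero
  set A : AffineSubspace ℝ (EuclideanSpace ℝ (Fin n)) := AffineSubspace.mk' y (ℝ ∙ e) with hAdef
  have hAne : A ≠ ⊤ := by
    intro htop
    obtain ⟨j, hj⟩ := Fintype.exists_ne_of_one_lt_card (by simp; omega) i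
    have hmem : y + EuclideanSpace.single j (1 : ℝ) ∈ A := by
      rw [htop]; trivial
    rw [hAdef, AffineSubspace.mem_mk'] at hmem
    have : (y + EuclideanSpace.single j (1 : ℝ)) -ᵥ y = EuclideanSpace.single j (1 : ℝ) := by
      simp [vsub_eq_sub]
    rw [this, Submodule.mem_span_singleton] at hmem
    obtain ⟨a, ha⟩ := hmem
    have := congrArg (fun w : EuclideanSpace ℝ (Fin n) => w j) ha
    simp [hedef, EuclideanSpace.single_apply, hj] at this
  have hAnull : (volume : Measure (EuclideanSpace ℝ (Fin n))) (A : Set _) = 0 :=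
    Measure.addHaar_affineSubspace _ A hAne
  have haeA : ∀ᵐ x ∂volume.restrict Ω, x ∉ (A : Set (EuclideanSpace ℝ (Fin n))) := by
    refine ae_restrict_of_ae ?_
    rw [ae_iff]
    simpa using hAnull
  -- bound for G on the relevant compact range
  obtain ⟨Cg, hCg⟩ := (isCompact_Icc (a := (0:ℝ)) (b := ‖y‖ + 1 + M)).exists_bound_of_continuousOn
    hGc.continuousOn
  have hCgnn : 0 ≤ Cg := by
    rcases le_or_gt 0 Cg with h | h
    · exact h
    · exact absurd (hCg 0 (Set.mem_Icc.mpr ⟨le_rfl, by linarith [hMnn', norm_nonneg y]⟩))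
        (by rw [Real.norm_eq_abs]; intro hc; linarith [abs_nonneg (G 0)])
  -- derivative under the integral sign
  set F' : ℝ → EuclideanSpace ℝ (Fin n) → ℝ := fun t x =>
    G ‖y + t • e - x‖ * ((y + t • e - x) i / ‖y + t • e - x‖) * v x with hF'def
  have hcoord_le : ∀ (z : EuclideanSpace ℝ (Fin n)), |z i / ‖z‖| ≤ 1 := by
    intro z
    rcases eq_or_ne z 0 with rfl | hz
    · simp
    · rw [abs_div, abs_norm, div_le_one (norm_pos_iff.mpr hz)]
      have hinner : ⟪z, e⟫ = z i := by
        rw [hedef, EuclideanSpace.inner_single_right]; simp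
      calc |z i| = ‖⟪z, e⟫‖ := by rw [hinner, Real.norm_eq_abs]
        _ ≤ ‖z‖ * ‖e‖ := norm_inner_le_norm z e
        _ = ‖z‖ := by rw [hnorme, mul_one]
  have hDkey := hasDerivAt_integral_of_dominated_loc_of_deriv_le (μ := volume.restrict Ω)
    (F := fun t x => F ‖y + t • e - x‖ * v x) (F' := F') (x₀ := (0:ℝ))
    (bound := fun x => Cg * v x) (Metric.ball_mem_nhds (0:ℝ) one_pos)
    (Filter.Eventually.of_forall fun t => hmeasL (y + t • e))
    (by simpa using hintL (y + (0:ℝ) • e))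
    (by
      apply AEStronglyMeasurable.mul _ hvmeas
      apply Measurable.aestronglyMeasurable
      have hc : Continuous fun x : EuclideanSpace ℝ (Fin n) => y + (0:ℝ) • e - x :=
        continuous_const.sub continuous_id
      exact ((hGc.comp hc.norm).measurable).mul
        ((((EuclideanSpace.proj (𝕜 := ℝ) i).continuous.comp hc).measurable).div
          hc.norm.measurable))
    (by
      filter_upwards [ae_restrict_mem hΩmeas] with x hx
      intro t ht
      have hzb : ‖y + t • e - x‖ ≤ ‖y‖ + 1 + M := by
        have h1 : ‖y + t • e - x‖ ≤ ‖y‖ + ‖t • e‖ + ‖x‖ := by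
          calc ‖y + t • e - x‖ ≤ ‖y + t • e‖ + ‖x‖ := norm_sub_le _ _
            _ ≤ ‖y‖ + ‖t • e‖ + ‖x‖ := by gcongr; exact norm_add_le _ _
        have h2 : ‖t • e‖ ≤ 1 := by
          rw [norm_smul, hnorme, mul_one]
          exact le_of_lt (by simpa [Real.norm_eq_abs, Metric.mem_ball, dist_zero_right] using ht)
        have := hxM x hx
        linarith
      rw [hF'def]
      have hGle : |G ‖y + t • e - x‖| ≤ Cg := by
        have := hCg ‖y + t • e - x‖ (Set.mem_Icc.mpr ⟨norm_nonneg _, hzb⟩)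
        rwa [Real.norm_eq_abs] at this
      calc ‖G ‖y + t • e - x‖ * ((y + t • e - x) i / ‖y + t • e - x‖) * v x‖
          = |G ‖y + t • e - x‖| * |(y + t • e - x) i / ‖y + t • e - x‖| * |v x| := by
            rw [Real.norm_eq_abs, abs_mul, abs_mul]
        _ ≤ Cg * 1 * v x := by
            apply mul_le_mul
            · exact mul_le_mul hGle (hcoord_le _) (abs_nonneg _) hCgnn
            · rw [abs_of_nonneg (hv x)]
            · exact abs_nonneg _
            · exact mul_nonneg hCgnn zero_le_one
        _ = Cg * v x := by ring)
    (hvint.const_mul Cg)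
    (by
      filter_upwards [haeA] with x hxA
      intro t ht
      have hne : y + t • e - x ≠ 0 := by
        intro h0
        apply hxA
        have hx : x = y + t • e := by
          have := sub_eq_zero.mp h0
          exact this.symm
        rw [hx]
        show y + t • e ∈ (A : Set (EuclideanSpace ℝ (Fin n)))
        rw [SetLike.mem_coe, hAdef, AffineSubspace.mem_mk']
        have : (y + t • e) -ᵥ y = t • e := by simp [vsub_eq_sub]
        rw [this]
        exact Submodule.mem_span_singleton.mpr ⟨t, rfl⟩
      have hrw : (fun s : ℝ => F ‖y + s • e - x‖ * v x)
          = fun s : ℝ => F ‖(y - x) + s • e‖ * v x := by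
        funext s
        congr 2
        abel_nf
      have hne' : (y - x) + t • e ≠ 0 := by
        intro h0; apply hne; rw [← h0]; abel
      have hd1 := aux_normline_hasDerivAt (y - x) e t hne'
      have hd2 := ((auxF_hasDerivAt hGc ‖(y - x) + t • e‖).comp t hd1).mul_const (v x)
      have hzz : y + t • e - x = (y - x) + t • e := by abel
      have hip : ⟪(y - x) + t • e, e⟫ = ((y - x) + t • e) i := by
        rw [hedef, EuclideanSpace.inner_single_right]
        simp
      have hgoal : F' t x = G ‖(y - x) + t • e‖ *
          (⟪(y - x) + t • e, e⟫ / ‖(y - x) + t • e‖) * v x := by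
        simp only [hF'def, hzz]
        rw [hip]
      rw [hrw, hgoal]
      exact hd2)
  obtain ⟨-, hD⟩ := hDkey
  have hLform : (fun t : ℝ => ∫ x in Ω, F ‖y + t • e - x‖ * v x ∂volume)
      = fun t : ℝ => L (y + t • e) := rfl
  rw [hLform] at hD
  have hlocal : IsLocalMin (fun t : ℝ => L (y + t • e)) 0 :=
    Filter.Eventually.of_forall fun t => by
      simpa using hglobal (y + t • e)
  have hder0 : (∫ x in Ω, F' 0 x ∂volume) = 0 := hlocal.hasDerivAt_eq_zero hD
  have hzero : (∫ x in Ω, G ‖y - x‖ * ((y - x) i / ‖y - x‖) * v x ∂volume) = 0 := by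
    rw [← hder0]
    congr 1
    funext x
    rw [hF'def]
    simp
  -- translate back
  set φ : EuclideanSpace ℝ (Fin n) → ℝ := fun u =>
    Ω.indicator (fun u => G ‖u - y‖ * ((u - y) i / ‖u - y‖) * v u) u with hφdef
  have hSmeas : MeasurableSet {x : EuclideanSpace ℝ (Fin n) | x + y ∈ Ω} :=
    hΩmeas.preimage (measurable_add_const y)
  have step1 : ∫ x in {x : EuclideanSpace ℝ (Fin n) | x + y ∈ Ω},
      g ‖x‖ * (x i / ‖x‖) * v (x + y) = ∫ x, φ (x + y) := by
    rw [← integral_indicator hSmeas]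
    congr 1
    funext x
    simp only [hφdef]
    by_cases hx : x + y ∈ Ω
    · rw [Set.indicator_of_mem (show x ∈ {x : EuclideanSpace ℝ (Fin n) | x + y ∈ Ω} from hx),
        Set.indicator_of_mem hx]
      have h1 : x + y - y = x := by abel
      rw [h1, hGg ‖x‖ (norm_nonneg x)]
    · rw [Set.indicator_of_notMem
        (show x ∉ {x : EuclideanSpace ℝ (Fin n) | x + y ∈ Ω} from hx),
        Set.indicator_of_notMem hx]
  have step2 : ∫ x, φ (x + y) = ∫ u, φ u := integral_add_right_eq_self φ y
  have step3 : ∫ u, φ u = ∫ u in Ω, G ‖u - y‖ * ((u - y) i / ‖u - y‖) * v u :=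
    integral_indicator hΩmeas
  have step4 : (∫ u in Ω, G ‖u - y‖ * ((u - y) i / ‖u - y‖) * v u)
      = - ∫ u in Ω, G ‖y - u‖ * ((y - u) i / ‖y - u‖) * v u := by
    rw [← integral_neg]
    congr 1
    funext u
    have h1 : ‖u - y‖ = ‖y - u‖ := norm_sub_rev u y
    have h2 : (u - y) i = -((y - u) i) := by
      have : (u - y : EuclideanSpace ℝ (Fin n)) = -(y - u) := by abel
      rw [this]; rfl
    rw [h1, h2]
    ring
  rw [step1, step2, step3, step4, hzero, neg_zero]
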